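/- Every asynchronous dual closed subtyping relation is an (orphan-message-free) asynchronous subtyping relation; hence T ≤_DC S implies T ≤ S. -/

import Mathlib

/-- Binary session types: output selection `⊕{lᵢ:Tᵢ}`, input branching `&{lᵢ:Tᵢ}`,
recursion `μt.T` (de Bruijn), variables, and `end`. Labels are natural numbers. -/
inductive SType : Type
  | out : List (Nat × SType) → SType
  | inp : List (Nat × SType) → SType
  | mu  : SType → SType
  | var : Nat → SType
  | done : SType

mutual
/-- The dual of a session type: swap `⊕` and `&`. -/
def SType.dual : SType → SType
  | .out bs => .inp (dualBranches bs)
  | .inp bs => .out (dualBranches bs)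
  | .mu t => .mu t.dual
  | .var n => .var n
  | .done => .done
def dualBranches : List (Nat × SType) → List (Nat × SType)
  | [] => []
  | (l, t) :: rest => (l, t.dual) :: dualBranches rest
end

mutual
/-- Substitution of `s` for the variable of de Bruijn index `k`. -/
def SType.subst (s : SType) : Nat → SType → SType
  | k, .out bs => .out (substBranches s k bs)
  | k, .inp bs => .inp (substBranches s k bs)
  | k, .mu t => .mu (SType.subst s (k+1) t)
  | k, .var n => if n = k then s else .var n
  | _, .done => .done
def substBranches (s : SType) : Nat → List (Nat × SType) → List (Nat × SType)
  | _, [] => []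
  | k, (l, t) :: rest => (l, SType.subst s k t) :: substBranches s k rest
end

mutual
/-- One-step unfolding of a session type. -/
def SType.unfold1 : SType → SType
  | .out bs => .out (unfold1Branches bs)
  | .inp bs => .inp (unfold1Branches bs)
  | .mu t => SType.subst (.mu t) 0 t
  | .var n => .var n
  | .done => .done
def unfold1Branches : List (Nat × SType) → List (Nat × SType)
  | [] => []
  | (l, t) :: rest => (l, t.unfold1) :: unfold1Branches rest
end

/-- `n`-fold unfolding. -/
def SType.unfoldN : Nat → SType → SType
  | 0, t => t
  | n+1, t => (SType.unfoldN n t).unfold1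

/-- A session type is single-out if every output selection has exactly one choice. -/
inductive SingleOut : SType → Prop
  | out {l t} : SingleOut t → SingleOut (.out [(l, t)])
  | inp {bs} : (∀ p ∈ bs, SingleOut p.2) → SingleOut (.inp bs)
  | mu {t} : SingleOut t → SingleOut (.mu t)
  | var {n} : SingleOut (.var n)
  | done : SingleOut .done

/-- A session type is single-in if every input branching has exactly one choice. -/
inductive SingleIn : SType → Prop
  | out {bs} : (∀ p ∈ bs, SingleIn p.2) → SingleIn (.out bs)
  | inp {l t} : SingleIn t → SingleIn (.inp [(l, t)])
  | mu {t} : SingleIn t → SingleIn (.mu t)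
  | var {n} : SingleIn (.var n)
  | done : SingleIn .done
/-- `T` contains at least one input branching. -/
inductive HasInp : SType → Prop
  | inp {bs} : HasInp (.inp bs)
  | out {bs l t} : (l, t) ∈ bs → HasInp t → HasInp (.out bs)
  | mu {t} : HasInp t → HasInp (.mu t)

/-- Input contexts: multi-hole contexts made of input branchings, holes are numbered. -/
inductive ICtx : Type
  | hole : Nat → ICtx
  | inp : List (Nat × ICtx) → ICtx

mutual
/-- Fill each hole `n` of the input context with `f n`. -/
def ICtx.fill : ICtx → (Nat → SType) → SType
  | .hole n, f => f n
  | .inp bs, f => .inp (fillBranches bs f)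
def fillBranches : List (Nat × ICtx) → (Nat → SType) → List (Nat × SType)
  | [], _ => []
  | (l, A) :: rest, f => (l, A.fill f) :: fillBranches rest f
end

mutual
/-- The list of hole indices occurring in an input context. -/
def ICtx.holes : ICtx → List Nat
  | .hole n => [n]
  | .inp bs => holesBranches bs
def holesBranches : List (Nat × ICtx) → List Nat
  | [] => []
  | (_, A) :: rest => A.holes ++ holesBranches rest
end

/-- Well-formed input context: holes are exactly `1..m` for some `m ≥ 1`,
each occurring exactly once. -/
def ICtx.WF (A : ICtx) : Prop :=
  ∃ m : Nat, 1 ≤ m ∧ A.holes.Perm (List.range' 1 m)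

/-- Labels of a branch list. -/
def labelsOf (bs : List (Nat × SType)) : List Nat := bs.map Prod.fst

def SubsetL (I J : List Nat) : Prop := ∀ l ∈ I, l ∈ J
def EqL (I J : List Nat) : Prop := ∀ l, l ∈ I ↔ l ∈ J

/-- `R` is an asynchronous subtyping relation, with flags:
`orphan`: include the no-orphan-message constraint in condition 2;
`outTotal`: require `I = J_k` in condition 2 (no output covariance);
`inTotal`: require `J = I` in condition 3 (no input contravariance). -/
def IsSubRel (orphan outTotal inTotal : Bool) (R : SType → SType → Prop) : Prop :=
  ∀ T S, R T S →
    -- 1. end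
    (T = .done → ∃ n, S.unfoldN n = .done) ∧
    -- 2. output selection
    (∀ bs, T = .out bs →
      ∃ (n : Nat) (A : ICtx) (Sb : Nat → List (Nat × SType)),
        A.WF ∧
        S.unfoldN n = A.fill (fun k => .out (Sb k)) ∧
        (∀ k ∈ A.holes,
          (outTotal = true → EqL (labelsOf bs) (labelsOf (Sb k))) ∧
          (outTotal = false → SubsetL (labelsOf bs) (labelsOf (Sb k)))) ∧
        (∀ l Ti, (l, Ti) ∈ bs → ∃ g : Nat → SType,
          (∀ k ∈ A.holes, (Sb k).lookup l = some (g k)) ∧ R Ti (A.fill g)) ∧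
        (orphan = true → A ≠ .hole 1 → ∀ l Ti, (l, Ti) ∈ bs → HasInp Ti)) ∧
    -- 3. input branching
    (∀ bs, T = .inp bs →
      ∃ (n : Nat) (Sb : List (Nat × SType)),
        S.unfoldN n = .inp Sb ∧
        (inTotal = true → EqL (labelsOf Sb) (labelsOf bs)) ∧
        (inTotal = false → SubsetL (labelsOf Sb) (labelsOf bs)) ∧
        (∀ l Sj, (l, Sj) ∈ Sb → ∃ Tj, bs.lookup l = some Tj ∧ R Tj Sj)) ∧
    -- 4. recursion
    (∀ T', T = .mu T' → R (SType.subst T 0 T') S)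

/-- An (orphan-message-free) asynchronous subtyping relation. -/
def IsAsyncSubRel (R : SType → SType → Prop) : Prop := IsSubRel true false false R

/-- Asynchronous subtyping `T ≤ S`. -/
def Subt (T S : SType) : Prop := ∃ R, IsAsyncSubRel R ∧ R T S

/-- `R` is dual closed: `(T,S) ∈ R` implies `(dual S, dual T) ∈ R`. -/
def DualClosed (R : SType → SType → Prop) : Prop :=
  ∀ T S, R T S → R S.dual T.dual

/-- An asynchronous dual closed subtyping relation: dual closed, and conditions
1, 3, 4 plus condition 2 without the no-orphan-message constraint. -/
def IsDCSubRel (R : SType → SType → Prop) : Prop :=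
  DualClosed R ∧ IsSubRel false false false R

/-- Asynchronous dual closed subtyping `T ≤_DC S`. -/
def SubtDC (T S : SType) : Prop := ∃ R, IsDCSubRel R ∧ R T S

mutual
theorem dual_dual : (t : SType) → t.dual.dual = t
  | .out bs => by simp [SType.dual, dualBranches_dual_dual bs]
  | .inp bs => by simp [SType.dual, dualBranches_dual_dual bs]
  | .mu t => by simp [SType.dual, dual_dual t]
  | .var _ => rfl
  | .done => rfl
theorem dualBranches_dual_dual : (bs : List (Nat × SType)) →
    dualBranches (dualBranches bs) = bs
  | [] => rfl
  | (l, t) :: rest => by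
      simp [dualBranches, dual_dual t, dualBranches_dual_dual rest]
end

mutual
theorem dual_subst (s : SType) : (k : Nat) → (t : SType) →
    (SType.subst s k t).dual = SType.subst s.dual k t.dual
  | k, .out bs => by
      simp [SType.subst, SType.dual, dual_substBranches s k bs]
  | k, .inp bs => by
      simp [SType.subst, SType.dual, dual_substBranches s k bs]
  | k, .mu t => by
      simp [SType.subst, SType.dual, dual_subst s (k+1) t]
  | k, .var n => by
      by_cases h : n = k <;> simp [SType.subst, SType.dual, h]
  | _, .done => rfl
theorem dual_substBranches (s : SType) : (k : Nat) → (bs : List (Nat × SType)) →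
    dualBranches (substBranches s k bs) = substBranches s.dual k (dualBranches bs)
  | _, [] => rfl
  | k, (l, t) :: rest => by
      simp [substBranches, dualBranches, dual_subst s k t,
        dual_substBranches s k rest]
end

mutual
theorem dual_unfold1 : (t : SType) → t.unfold1.dual = t.dual.unfold1
  | .out bs => by
      simp [SType.unfold1, SType.dual, dual_unfold1Branches bs]
  | .inp bs => by
      simp [SType.unfold1, SType.dual, dual_unfold1Branches bs]
  | .mu t => by
      simp [SType.unfold1, SType.dual, dual_subst (.mu t) 0 t]
  | .var _ => rfl
  | .done => rfl
theorem dual_unfold1Branches : (bs : List (Nat × SType)) →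
    dualBranches (unfold1Branches bs) = unfold1Branches (dualBranches bs)
  | [] => rfl
  | (l, t) :: rest => by
      simp [unfold1Branches, dualBranches, dual_unfold1 t,
        dual_unfold1Branches rest]
end

theorem dual_unfoldN : (n : Nat) → (t : SType) →
    (SType.unfoldN n t).dual = SType.unfoldN n t.dual
  | 0, _ => rfl
  | n+1, t => by
      simp [SType.unfoldN, dual_unfold1, dual_unfoldN n t]

mutual
theorem hasInp_subst (s : SType) : (k : Nat) → (t : SType) →
    HasInp (SType.subst s k t) → HasInp t ∨ HasInp s
  | k, .out bs, h => by
      rw [SType.subst] at h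
      cases h with
      | out hm hi =>
        rcases hasInp_substBranches s k bs _ _ hm hi with ⟨t, htm, hti⟩ | hs
        · exact Or.inl (HasInp.out htm hti)
        · exact Or.inr hs
  | _, .inp bs, _ => Or.inl HasInp.inp
  | k, .mu t, h => by
      rw [SType.subst] at h
      cases h with
      | mu hi =>
        rcases hasInp_subst s (k+1) t hi with ht | hs
        · exact Or.inl (HasInp.mu ht)
        · exact Or.inr hs
  | k, .var n, h => by
      rw [SType.subst] at h
      by_cases hnk : n = k
      · rw [if_pos hnk] at h; exact Or.inr h
      · rw [if_neg hnk] at h; cases h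
  | _, .done, h => by rw [SType.subst] at h; cases h
theorem hasInp_substBranches (s : SType) : (k : Nat) → (bs : List (Nat × SType)) →
    (l : Nat) → (u : SType) → (l, u) ∈ substBranches s k bs → HasInp u →
    (∃ t, (l, t) ∈ bs ∧ HasInp t) ∨ HasInp s
  | _, [], _, _, h, _ => by rw [substBranches] at h; cases h
  | k, (l0, t0) :: rest, l, u, h, hi => by
      rw [substBranches] at h
      rcases List.mem_cons.1 h with heq | htail
      · obtain ⟨h1, h2⟩ := Prod.mk.injEq .. ▸ heq
        subst h1; subst h2
        rcases hasInp_subst s k t0 hi with ht | hs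
        · exact Or.inl ⟨t0, List.mem_cons_self, ht⟩
        · exact Or.inr hs
      · rcases hasInp_substBranches s k rest l u htail hi with ⟨t, htm, hti⟩ | hs
        · exact Or.inl ⟨t, List.mem_cons_of_mem _ htm, hti⟩
        · exact Or.inr hs
end

mutual
theorem hasInp_unfold1 : (t : SType) → HasInp t.unfold1 → HasInp t
  | .out bs, h => by
      rw [SType.unfold1] at h
      cases h with
      | out hm hi =>
        obtain ⟨t, htm, hti⟩ := hasInp_unfold1Branches bs _ _ hm hi
        exact HasInp.out htm hti
  | .inp bs, _ => HasInp.inp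
  | .mu t, h => by
      rw [SType.unfold1] at h
      rcases hasInp_subst (.mu t) 0 t h with ht | hs
      · exact HasInp.mu ht
      · exact hs
  | .var n, h => by rw [SType.unfold1] at h; cases h
  | .done, h => by rw [SType.unfold1] at h; cases h
theorem hasInp_unfold1Branches : (bs : List (Nat × SType)) →
    (l : Nat) → (u : SType) → (l, u) ∈ unfold1Branches bs → HasInp u →
    ∃ t, (l, t) ∈ bs ∧ HasInp t
  | [], _, _, h, _ => by rw [unfold1Branches] at h; cases h
  | (l0, t0) :: rest, l, u, h, hi => by
      rw [unfold1Branches] at h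
      rcases List.mem_cons.1 h with heq | htail
      · obtain ⟨h1, h2⟩ := Prod.mk.injEq .. ▸ heq
        subst h1; subst h2
        exact ⟨t0, List.mem_cons_self, hasInp_unfold1 t0 hi⟩
      · obtain ⟨t, htm, hti⟩ := hasInp_unfold1Branches rest l u htail hi
        exact ⟨t, List.mem_cons_of_mem _ htm, hti⟩
end

theorem hasInp_unfoldN : (n : Nat) → (t : SType) →
    HasInp (SType.unfoldN n t) → HasInp t
  | 0, _, h => h
  | n+1, t, h => hasInp_unfoldN n t (hasInp_unfold1 _ h)

mutual
theorem fill_dual_hasInp (Sb : Nat → List (Nat × SType)) : (A : ICtx) →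
    A.holes ≠ [] → HasInp ((A.fill (fun k => .out (Sb k))).dual)
  | .hole n, _ => by
      rw [ICtx.fill, SType.dual]
      exact HasInp.inp
  | .inp bsA, h => by
      rw [ICtx.fill, SType.dual]
      obtain ⟨l, u, hm, hi⟩ :=
        fillBranches_dual_hasInp Sb bsA (by rwa [ICtx.holes] at h)
      exact HasInp.out hm hi
theorem fillBranches_dual_hasInp (Sb : Nat → List (Nat × SType)) :
    (bs : List (Nat × ICtx)) → holesBranches bs ≠ [] →
    ∃ l u, (l, u) ∈ dualBranches (fillBranches bs (fun k => .out (Sb k))) ∧ HasInp u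
  | [], h => absurd (by rw [holesBranches]) h
  | (l0, A) :: rest, h => by
      by_cases hA : A.holes = []
      · obtain ⟨l, u, hm, hi⟩ := fillBranches_dual_hasInp Sb rest (by
          intro hc; apply h; rw [holesBranches, hA, hc]; rfl)
        refine ⟨l, u, ?_, hi⟩
        rw [fillBranches, dualBranches]
        exact List.mem_cons_of_mem _ hm
      · refine ⟨l0, (A.fill (fun k => .out (Sb k))).dual, ?_,
          fill_dual_hasInp Sb A hA⟩
        rw [fillBranches, dualBranches]
        exact List.mem_cons_self
end

theorem dc_part1 (R : SType → SType → Prop) (hR : IsDCSubRel R) :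
    IsAsyncSubRel R := by
  obtain ⟨hdc, hsub⟩ := hR
  intro T S hTS
  obtain ⟨h1, h2, h3, h4⟩ := hsub T S hTS
  refine ⟨h1, ?_, h3, h4⟩
  intro bs hT
  obtain ⟨n, A, Sb, hWF, hun, hlab, hcont, _⟩ := h2 bs hT
  refine ⟨n, A, Sb, hWF, hun, hlab, hcont, ?_⟩
  intro _ hA l Ti hmem
  obtain ⟨m, hm, hperm⟩ := hWF
  obtain ⟨bsA, rfl⟩ : ∃ bsA, A = .inp bsA := by
    cases A with
    | hole k =>
      exfalso
      apply hA
      have hlen := hperm.length_eq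
      rw [ICtx.holes, List.length_range'] at hlen
      simp only [List.length_cons, List.length_nil] at hlen
      have hm1 : m = 1 := hlen.symm
      subst hm1
      have h1 : List.range' 1 1 = [1] := rfl
      rw [ICtx.holes, h1] at hperm
      have hk := List.perm_singleton.mp hperm
      rw [List.cons.injEq] at hk
      rw [hk.1]
    | inp bsA => exact ⟨bsA, rfl⟩
  obtain ⟨g, _, hRcont⟩ := hcont l Ti hmem
  have hR' := hdc _ _ hRcont
  obtain ⟨_, h2', _, _⟩ := hsub _ _ hR'
  obtain ⟨n', A', Sb', hWF', hun', _⟩ :=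
    h2' (dualBranches (fillBranches bsA g)) (by rw [ICtx.fill, SType.dual])
  have hne : A'.holes ≠ [] := by
    obtain ⟨m', hm', hperm'⟩ := hWF'
    intro hc
    have := hperm'.length_eq
    rw [hc, List.length_range'] at this
    simp at this
    omega
  have hinp := fill_dual_hasInp Sb' A' hne
  rw [← hun', dual_unfoldN, dual_dual] at hinp
  exact hasInp_unfoldN n' Ti hinp

/-- every asynchronous dual closed subtyping relation is an
(orphan-message-free) asynchronous subtyping relation; hence `T ≤_DC S`
implies `T ≤ S`. -/
theorem dc_implies_async :
    (∀ R : SType → SType → Prop, IsDCSubRel R → IsAsyncSubRel R) ∧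
    (∀ T S : SType, SubtDC T S → Subt T S) := by
  refine ⟨dc_part1, ?_⟩
  rintro T S ⟨R, hR, hTS⟩
  exact ⟨R, dc_part1 R hR, hTS⟩
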